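/- Let ℓ be a logic in the language L(□,I) containing il⁻ and closed under its rules, Φ a finite adequate set, and Γ a Φ-maximally ℓ-consistent set. If ¬□C ∈ Γ, then there exists a Φ-maximally ℓ-consistent set Δ such that Γ ≺ Δ and both ∼C ∈ Δ and □C ∈ Δ, where Γ ≺ Δ means {B, □B : □B ∈ Γ} ⊆ Δ and there is □C' ∈ Δ with □C' ∉ Γ. -/

import Mathlib

/-- Formulas of the language L(□,I) of unary interpretability logic. -/
inductive UFml : Type
  | bot : UFml
  | var : ℕ → UFml
  | imp : UFml → UFml → UFml
  | box : UFml → UFml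
  | I : UFml → UFml
  deriving DecidableEq

namespace UFml
def neg (A : UFml) : UFml := A.imp bot
def top : UFml := UFml.bot.imp UFml.bot
def or (A B : UFml) : UFml := A.neg.imp B
def and (A B : UFml) : UFml := (A.imp B.neg).neg
def dia (A : UFml) : UFml := (A.neg.box).neg
end UFml

/-- Propositional tautologies of L(□,I). -/
def UTaut (A : UFml) : Prop :=
  ∀ v : UFml → Bool, v UFml.bot = false →
    (∀ B C : UFml, v (B.imp C) = (!(v B) || v C)) → v A = true

/-- Provability in il⁻ extended by an additional set `Ax` of axioms.
Axioms: G1' (tautologies), G2, G3 (Löb), uJ6 (□⊥ ↔ I⊥, both directions);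
rules: modus ponens, necessitation, uR. -/
inductive IlMinus (Ax : UFml → Prop) : UFml → Prop
  | ax {A : UFml} : Ax A → IlMinus Ax A
  | taut {A : UFml} : UTaut A → IlMinus Ax A
  | G2 (A B : UFml) : IlMinus Ax (((A.imp B).box).imp ((A.box).imp (B.box)))
  | G3 (A : UFml) : IlMinus Ax ((((A.box).imp A).box).imp (A.box))
  | uJ6a : IlMinus Ax ((UFml.bot.box).imp (UFml.I UFml.bot))
  | uJ6b : IlMinus Ax ((UFml.I UFml.bot).imp (UFml.bot.box))
  | mp {A B : UFml} : IlMinus Ax (A.imp B) → IlMinus Ax A → IlMinus Ax B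
  | nec {A : UFml} : IlMinus Ax A → IlMinus Ax (A.box)
  | uR {A B : UFml} : IlMinus Ax (A.imp B) → IlMinus Ax ((UFml.I A).imp (UFml.I B))

/-- The axiom schema uJ1 : □A → IA. -/
def uJ1Ax : UFml → Prop := fun F => ∃ A : UFml, F = (A.box).imp (UFml.I A)

/-- The axiom schema uJ15 : □(A ∨ ◇A) → IA. -/
def uJ15Ax : UFml → Prop := fun F => ∃ A : UFml, F = ((A.or A.dia).box).imp (UFml.I A)

/-- The axiom schema I1 : I□⊥. -/
def I1Ax : UFml → Prop := fun F => F = UFml.I (UFml.bot.box)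

/-- The axiom schema I2 : □(A→B) → (IA → IB). -/
def I2Ax : UFml → Prop :=
  fun F => ∃ A B : UFml, F = ((A.imp B).box).imp ((UFml.I A).imp (UFml.I B))

/-- The axiom schema I3 : I(A ∨ ◇A) → IA. -/
def I3Ax : UFml → Prop := fun F => ∃ A : UFml, F = (UFml.I (A.or A.dia)).imp (UFml.I A)

/-- The axiom schema I4 : IA ∧ ◇⊤ → ◇A. -/
def I4Ax : UFml → Prop := fun F => ∃ A : UFml, F = ((UFml.I A).and UFml.top.dia).imp A.dia

/-- De Rijke's unary interpretability logic il: axioms G1', G2, G3, I1, I2, I3, I4;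
rules modus ponens and necessitation. -/
inductive Il : UFml → Prop
  | taut {A : UFml} : UTaut A → Il A
  | G2 (A B : UFml) : Il (((A.imp B).box).imp ((A.box).imp (B.box)))
  | G3 (A : UFml) : Il ((((A.box).imp A).box).imp (A.box))
  | I1 : Il (UFml.I (UFml.bot.box))
  | I2 (A B : UFml) : Il (((A.imp B).box).imp ((UFml.I A).imp (UFml.I B)))
  | I3 (A : UFml) : Il ((UFml.I (A.or A.dia)).imp (UFml.I A))
  | I4 (A : UFml) : Il (((UFml.I A).and UFml.top.dia).imp A.dia)
  | mp {A B : UFml} : Il (A.imp B) → Il A → Il B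
  | nec {A : UFml} : Il A → Il (A.box)

namespace UFml

/-- ∼A : B if A is of the form ¬B (i.e. B → ⊥), and ¬A otherwise. -/
def sim : UFml → UFml
  | .imp B .bot => B
  | A => A.imp .bot

/-- The set of subformulas of a formula. -/
def subf : UFml → Finset UFml
  | .bot => {.bot}
  | .var n => {.var n}
  | .imp A B => insert (.imp A B) (A.subf ∪ B.subf)
  | .box A => insert (.box A) A.subf
  | .I A => insert (.I A) A.subf

end UFml

/-- Φ is an adequate set: closed under subformulas and ∼, ⊥ ∈ Φ_I
(i.e. I⊥ ∈ Φ), and for C, E ∈ Φ_I the boxed combinations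
□C, □(C∨◇C), □(E→◇C), □(E→C), □(E→C∨◇C) are in Φ. -/
def Adequate (Φ : Finset UFml) : Prop :=
  (∀ A ∈ Φ, A.subf ⊆ Φ) ∧
  (∀ A ∈ Φ, A.sim ∈ Φ) ∧
  (UFml.I UFml.bot ∈ Φ) ∧
  (∀ C E : UFml, UFml.I C ∈ Φ → UFml.I E ∈ Φ →
    C.box ∈ Φ ∧ (C.or C.dia).box ∈ Φ ∧ (E.imp C.dia).box ∈ Φ ∧
      (E.imp C).box ∈ Φ ∧ (E.imp (C.or C.dia)).box ∈ Φ)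

/-- The conjunction of a finite set of formulas. -/
noncomputable def conj (X : Finset UFml) : UFml :=
  X.toList.foldr UFml.and UFml.top

/-- A finite set X is ℓ-consistent if ℓ does not prove ⋀X → ⊥. -/
def LCons (ℓ : UFml → Prop) (X : Finset UFml) : Prop :=
  ¬ ℓ ((conj X).imp UFml.bot)

/-- Γ ⊆ Φ is Φ-maximally ℓ-consistent. -/
def MaxCons (ℓ : UFml → Prop) (Φ Γ : Finset UFml) : Prop :=
  Γ ⊆ Φ ∧ LCons ℓ Γ ∧ ∀ A ∈ Φ, A ∈ Γ ∨ A.sim ∈ Γ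

/-- Γ ≺ Δ : {B, □B : □B ∈ Γ} ⊆ Δ and some □C' ∈ Δ with □C' ∉ Γ. -/
def Prec (Γ Δ : Finset UFml) : Prop :=
  (∀ B : UFml, B.box ∈ Γ → B ∈ Δ ∧ B.box ∈ Δ) ∧
    ∃ C' : UFml, C'.box ∈ Δ ∧ C'.box ∉ Γ

namespace SuccAux

open UFml

def isBox : UFml → Bool
  | .box _ => true
  | _ => false

def unbox : UFml → UFml
  | .box B => B
  | A => A

lemma isBox_iff {A : UFml} : isBox A = true ↔ ∃ B : UFml, A = UFml.box B := by
  cases A <;> simp [isBox]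

lemma v_sim (v : UFml → Bool) (h0 : v UFml.bot = false)
    (h1 : ∀ B C : UFml, v (B.imp C) = (!(v B) || v C)) (A : UFml) :
    v A.sim = ! v A := by
  cases A with
  | imp B C =>
    cases C with
    | bot => simp [UFml.sim, h1, h0]
    | var n => simp [UFml.sim, h1, h0]
    | imp D E => simp [UFml.sim, h1, h0]
    | box D => simp [UFml.sim, h1, h0]
    | I D => simp [UFml.sim, h1, h0]
  | bot => simp [UFml.sim, h1, h0]
  | var n => simp [UFml.sim, h1, h0]
  | box B => simp [UFml.sim, h1, h0]
  | I B => simp [UFml.sim, h1, h0]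

section Logic

variable (ℓ : UFml → Prop)
variable (hIl : ∀ A : UFml, IlMinus (fun _ => False) A → ℓ A)
variable (hMP : ∀ A B : UFml, ℓ (A.imp B) → ℓ A → ℓ B)
variable (hNec : ∀ A : UFml, ℓ A → ℓ A.box)

include hIl hMP hNec

lemma pr_taut {A : UFml} (h : UTaut A) : ℓ A := hIl A (IlMinus.taut h)

lemma pr_mp2 {G A B : UFml} (h1 : ℓ (G.imp (A.imp B))) (h2 : ℓ (G.imp A)) :
    ℓ (G.imp B) := by
  have t : UTaut ((G.imp (A.imp B)).imp ((G.imp A).imp (G.imp B))) := by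
    intro v h0 hv
    simp only [hv]
    cases v G <;> cases v A <;> cases v B <;> rfl
  exact hMP _ _ (hMP _ _ (pr_taut ℓ hIl hMP hNec t) h1) h2

lemma pr_trans {A B C : UFml} (h1 : ℓ (A.imp B)) (h2 : ℓ (B.imp C)) :
    ℓ (A.imp C) := by
  have t : UTaut ((A.imp B).imp ((B.imp C).imp (A.imp C))) := by
    intro v h0 hv
    simp only [hv]
    cases v A <;> cases v B <;> cases v C <;> rfl
  exact hMP _ _ (hMP _ _ (pr_taut ℓ hIl hMP hNec t) h1) h2

lemma pr_weaken {G A : UFml} (h : ℓ A) : ℓ (G.imp A) := by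
  have t : UTaut (A.imp (G.imp A)) := by
    intro v h0 hv
    simp only [hv]
    cases v A <;> cases v G <;> rfl
  exact hMP _ _ (pr_taut ℓ hIl hMP hNec t) h

lemma pr_and_left {A B : UFml} : ℓ ((A.and B).imp A) := by
  apply pr_taut ℓ hIl hMP hNec
  intro v h0 hv
  simp only [UFml.and, UFml.neg, hv, h0]
  cases v A <;> cases v B <;> rfl

lemma pr_and_right {A B : UFml} : ℓ ((A.and B).imp B) := by
  apply pr_taut ℓ hIl hMP hNec
  intro v h0 hv
  simp only [UFml.and, UFml.neg, hv, h0]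
  cases v A <;> cases v B <;> rfl

lemma pr_and_intro {G A B : UFml} (h1 : ℓ (G.imp A)) (h2 : ℓ (G.imp B)) :
    ℓ (G.imp (A.and B)) := by
  have t : UTaut ((G.imp A).imp ((G.imp B).imp (G.imp (A.and B)))) := by
    intro v h0 hv
    simp only [UFml.and, UFml.neg, hv, h0]
    cases v G <;> cases v A <;> cases v B <;> rfl
  exact hMP _ _ (hMP _ _ (pr_taut ℓ hIl hMP hNec t) h1) h2

lemma pr_top : ℓ UFml.top := by
  apply pr_taut ℓ hIl hMP hNec
  intro v h0 hv
  simp only [UFml.top, hv, h0]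
  rfl

lemma pr_top_imp {G : UFml} : ℓ (G.imp UFml.top) :=
  pr_weaken ℓ hIl hMP hNec (pr_top ℓ hIl hMP hNec)

lemma lconj_memb {A : UFml} {l : List UFml} (h : A ∈ l) :
    ℓ ((l.foldr UFml.and UFml.top).imp A) := by
  induction l with
  | nil => cases h
  | cons B t ih =>
    rcases List.mem_cons.mp h with h | h
    · subst h; exact pr_and_left ℓ hIl hMP hNec
    · exact pr_trans ℓ hIl hMP hNec (pr_and_right ℓ hIl hMP hNec) (ih h)

lemma lconj_intro {G : UFml} {l : List UFml} (h : ∀ A ∈ l, ℓ (G.imp A)) :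
    ℓ (G.imp (l.foldr UFml.and UFml.top)) := by
  induction l with
  | nil => exact pr_top_imp ℓ hIl hMP hNec
  | cons B t ih =>
    exact pr_and_intro ℓ hIl hMP hNec (h B List.mem_cons_self)
      (ih (fun A hA => h A (List.mem_cons_of_mem B hA)))

lemma conj_memb {A : UFml} {X : Finset UFml} (h : A ∈ X) :
    ℓ ((conj X).imp A) :=
  lconj_memb ℓ hIl hMP hNec (Finset.mem_toList.mpr h)

lemma conj_intro {G : UFml} {X : Finset UFml} (h : ∀ A ∈ X, ℓ (G.imp A)) :
    ℓ (G.imp (conj X)) :=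
  lconj_intro ℓ hIl hMP hNec (fun A hA => h A (Finset.mem_toList.mp hA))

lemma conj_mono {X Y : Finset UFml} (h : X ⊆ Y) :
    ℓ ((conj Y).imp (conj X)) :=
  conj_intro ℓ hIl hMP hNec (fun A hA => conj_memb ℓ hIl hMP hNec (h hA))

lemma box_mono {A B : UFml} (h : ℓ (A.imp B)) : ℓ (A.box.imp B.box) :=
  hMP _ _ (hIl _ (IlMinus.G2 A B)) (hNec _ h)

lemma box4 {A : UFml} : ℓ (A.box.imp A.box.box) := by
  have ha : ℓ ((A.and A.box).box.imp A.box) :=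
    box_mono ℓ hIl hMP hNec (pr_and_left ℓ hIl hMP hNec)
  have t2 : UTaut (((A.and A.box).box.imp A.box).imp
      (A.imp ((A.and A.box).box.imp (A.and A.box)))) := by
    intro v h0 hv
    simp only [UFml.and, UFml.neg, hv, h0]
    cases v A <;> cases v A.box <;>
      cases v (((A.imp (A.box.imp UFml.bot)).imp UFml.bot).box) <;> rfl
  have h1 : ℓ (A.imp ((A.and A.box).box.imp (A.and A.box))) :=
    hMP _ _ (pr_taut ℓ hIl hMP hNec t2) ha
  have h2 : ℓ (A.box.imp (((A.and A.box).box.imp (A.and A.box)).box)) :=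
    box_mono ℓ hIl hMP hNec h1
  have h3 : ℓ (A.box.imp (A.and A.box).box) :=
    pr_trans ℓ hIl hMP hNec h2 (hIl _ (IlMinus.G3 (A.and A.box)))
  have h4 : ℓ ((A.and A.box).box.imp A.box.box) :=
    box_mono ℓ hIl hMP hNec (pr_and_right ℓ hIl hMP hNec)
  exact pr_trans ℓ hIl hMP hNec h3 h4

lemma box_and {A B : UFml} : ℓ (A.box.imp (B.box.imp (A.and B).box)) := by
  have t : ℓ (A.imp (B.imp (A.and B))) := by
    apply pr_taut ℓ hIl hMP hNec
    intro v h0 hv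
    simp only [UFml.and, UFml.neg, hv, h0]
    cases v A <;> cases v B <;> rfl
  have h1 : ℓ (A.box.imp ((B.imp (A.and B)).box)) := box_mono ℓ hIl hMP hNec t
  exact pr_trans ℓ hIl hMP hNec h1 (hIl _ (IlMinus.G2 B (A.and B)))

lemma lconj_box_intro {G : UFml} {l : List UFml}
    (h : ∀ A ∈ l, ℓ (G.imp A.box)) :
    ℓ (G.imp (l.foldr UFml.and UFml.top).box) := by
  induction l with
  | nil => exact pr_weaken ℓ hIl hMP hNec (hNec _ (pr_top ℓ hIl hMP hNec))
  | cons B t ih =>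
    have h1 : ℓ (G.imp B.box) := h B List.mem_cons_self
    have h2 : ℓ (G.imp (t.foldr UFml.and UFml.top).box) :=
      ih (fun A hA => h A (List.mem_cons_of_mem B hA))
    have h3 : ℓ (G.imp ((t.foldr UFml.and UFml.top).box.imp
        (B.and (t.foldr UFml.and UFml.top)).box)) :=
      pr_trans ℓ hIl hMP hNec h1 (box_and ℓ hIl hMP hNec)
    exact pr_mp2 ℓ hIl hMP hNec h3 h2

lemma conj_box_intro {G : UFml} {X : Finset UFml}
    (h : ∀ A ∈ X, ℓ (G.imp A.box)) : ℓ (G.imp (conj X).box) :=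
  lconj_box_intro ℓ hIl hMP hNec (fun A hA => h A (Finset.mem_toList.mp hA))

lemma insert_bridge {A : UFml} {X : Finset UFml} :
    ℓ (((conj X).and A).imp (conj (insert A X))) := by
  apply conj_intro ℓ hIl hMP hNec
  intro M hM
  rcases Finset.mem_insert.mp hM with h | h
  · subst h; exact pr_and_right ℓ hIl hMP hNec
  · exact pr_trans ℓ hIl hMP hNec (pr_and_left ℓ hIl hMP hNec)
      (conj_memb ℓ hIl hMP hNec h)

lemma lcons_dichotomy {A : UFml} {X : Finset UFml} (h : LCons ℓ X) :
    LCons ℓ (insert A X) ∨ LCons ℓ (insert A.sim X) := by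
  by_contra hcon
  push_neg at hcon
  obtain ⟨h1, h2⟩ := hcon
  have h1' : ℓ ((conj (insert A X)).imp UFml.bot) := not_not.mp h1
  have h2' : ℓ ((conj (insert A.sim X)).imp UFml.bot) := not_not.mp h2
  have hA : ℓ (((conj X).and A).imp UFml.bot) :=
    pr_trans ℓ hIl hMP hNec (insert_bridge ℓ hIl hMP hNec) h1'
  have hS : ℓ (((conj X).and A.sim).imp UFml.bot) :=
    pr_trans ℓ hIl hMP hNec (insert_bridge ℓ hIl hMP hNec) h2'
  have t : UTaut ((((conj X).and A).imp UFml.bot).imp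
      (((((conj X).and A.sim).imp UFml.bot)).imp ((conj X).imp UFml.bot))) := by
    intro v h0 hv
    have hs := v_sim v h0 hv A
    simp only [UFml.and, UFml.neg, hv, h0, hs]
    cases v (conj X) <;> cases v A <;> rfl
  have : ℓ ((conj X).imp UFml.bot) :=
    hMP _ _ (hMP _ _ (pr_taut ℓ hIl hMP hNec t) hA) hS
  exact h this

lemma lindenbaum (Φ : Finset UFml) (hsim : ∀ A ∈ Φ, A.sim ∈ Φ) :
    ∀ (l : List UFml), (∀ A ∈ l, A ∈ Φ) → ∀ X : Finset UFml, X ⊆ Φ →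
      LCons ℓ X →
      ∃ Δ : Finset UFml, X ⊆ Δ ∧ Δ ⊆ Φ ∧ LCons ℓ Δ ∧
        ∀ A ∈ l, A ∈ Δ ∨ A.sim ∈ Δ := by
  intro l
  induction l with
  | nil =>
    intro _ X hXΦ hX
    exact ⟨X, Finset.Subset.refl X, hXΦ, hX, by simp⟩
  | cons A t ih =>
    intro hl X hXΦ hX
    have hAΦ : A ∈ Φ := hl A List.mem_cons_self
    have ht : ∀ B ∈ t, B ∈ Φ := fun B hB => hl B (List.mem_cons_of_mem A hB)
    rcases lcons_dichotomy ℓ hIl hMP hNec (A := A) hX with hc | hc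
    · obtain ⟨Δ, hs1, hs2, hs3, hs4⟩ := ih ht (insert A X)
        (Finset.insert_subset hAΦ hXΦ) hc
      exact ⟨Δ, fun B hB => hs1 (Finset.mem_insert_of_mem hB), hs2, hs3,
        fun B hB => by
          rcases List.mem_cons.mp hB with h | h
          · subst h; exact Or.inl (hs1 (Finset.mem_insert_self _ _))
          · exact hs4 B h⟩
    · obtain ⟨Δ, hs1, hs2, hs3, hs4⟩ := ih ht (insert A.sim X)
        (Finset.insert_subset (hsim A hAΦ) hXΦ) hc
      exact ⟨Δ, fun B hB => hs1 (Finset.mem_insert_of_mem hB), hs2, hs3,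
        fun B hB => by
          rcases List.mem_cons.mp hB with h | h
          · subst h; exact Or.inr (hs1 (Finset.mem_insert_self _ _))
          · exact hs4 B h⟩

end Logic

lemma self_mem_subf (A : UFml) : A ∈ A.subf := by
  cases A <;> simp [UFml.subf]

end SuccAux

/-- For any logic ℓ containing il⁻ and closed under its rules, any finite
adequate set Φ, and any Φ-maximally ℓ-consistent Γ with ¬□C ∈ Γ, there is a
Φ-maximally ℓ-consistent Δ with Γ ≺ Δ, ∼C ∈ Δ and □C ∈ Δ. -/

theorem exists_succ_with_box (ℓ : UFml → Prop)
    (hIl : ∀ A : UFml, IlMinus (fun _ => False) A → ℓ A)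
    (hMP : ∀ A B : UFml, ℓ (A.imp B) → ℓ A → ℓ B)
    (hNec : ∀ A : UFml, ℓ A → ℓ A.box)
    (hUR : ∀ A B : UFml, ℓ (A.imp B) → ℓ ((UFml.I A).imp (UFml.I B)))
    (Φ Γ : Finset UFml) (C : UFml)
    (hΦ : Adequate Φ) (hΓ : MaxCons ℓ Φ Γ)
    (hC : (C.box).neg ∈ Γ) :
    ∃ Δ : Finset UFml, MaxCons ℓ Φ Δ ∧ Prec Γ Δ ∧ C.sim ∈ Δ ∧ C.box ∈ Δ := by
  classical
  obtain ⟨hΓΦ, hΓcons, hΓmax⟩ := hΓ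
  -- basic membership facts in Φ
  have hnegΦ : (C.box).neg ∈ Φ := hΓΦ hC
  have hboxΦ : C.box ∈ Φ := by
    have : C.box ∈ ((C.box).neg).subf := by
      simp [UFml.neg, UFml.subf, SuccAux.self_mem_subf]
    exact hΦ.1 _ hnegΦ this
  have hCΦ : C ∈ Φ := by
    have : C ∈ (C.box).subf := by
      simp [UFml.subf, SuccAux.self_mem_subf]
    exact hΦ.1 _ hboxΦ this
  have hsimΦ : C.sim ∈ Φ := hΦ.2.1 C hCΦ
  -- the boxed part of Γ and the base set X₀
  set Γb : Finset UFml := Γ.filter (fun A => SuccAux.isBox A = true) with hΓb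
  set P : Finset UFml := Γb ∪ Γb.image SuccAux.unbox with hP
  set X₀ : Finset UFml := insert C.sim (insert C.box P) with hX₀
  have hΓbΓ : Γb ⊆ Γ := Finset.filter_subset _ _
  have hPΦ : P ⊆ Φ := by
    intro M hM
    rcases Finset.mem_union.mp hM with h | h
    · exact hΓΦ (hΓbΓ h)
    · obtain ⟨N, hN, rfl⟩ := Finset.mem_image.mp h
      obtain ⟨hNΓ, hNb⟩ := Finset.mem_filter.mp hN
      obtain ⟨B, rfl⟩ := SuccAux.isBox_iff.mp hNb
      have hBox : B.box ∈ Φ := hΓΦ hNΓ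
      have : B ∈ (B.box).subf := by
        simp [UFml.subf, SuccAux.self_mem_subf]
      have hBΦ : B ∈ Φ := hΦ.1 _ hBox this
      simpa [SuccAux.unbox] using hBΦ
  have hX₀Φ : X₀ ⊆ Φ := by
    intro M hM
    rcases Finset.mem_insert.mp hM with h | h
    · subst h; exact hsimΦ
    rcases Finset.mem_insert.mp h with h | h
    · subst h; exact hboxΦ
    · exact hPΦ h
  -- Γ cannot prove ⊥
  have hΓnotbot : ¬ ℓ ((conj Γ).imp UFml.bot) := hΓcons
  -- consistency of X₀
  have hcons : LCons ℓ X₀ := by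
    intro habs
    -- bridge K → conj X₀ where K = conj P ∧ (□C ∧ ∼C)
    set K : UFml := (conj P).and ((C.box).and C.sim) with hK
    have hbr : ℓ (K.imp (conj X₀)) := by
      apply SuccAux.conj_intro ℓ hIl hMP hNec
      intro M hM
      rcases Finset.mem_insert.mp hM with h | h
      · subst h
        exact SuccAux.pr_trans ℓ hIl hMP hNec (SuccAux.pr_and_right ℓ hIl hMP hNec)
          (SuccAux.pr_and_right ℓ hIl hMP hNec)
      rcases Finset.mem_insert.mp h with h | h
      · subst h
        exact SuccAux.pr_trans ℓ hIl hMP hNec (SuccAux.pr_and_right ℓ hIl hMP hNec)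
          (SuccAux.pr_and_left ℓ hIl hMP hNec)
      · exact SuccAux.pr_trans ℓ hIl hMP hNec (SuccAux.pr_and_left ℓ hIl hMP hNec)
          (SuccAux.conj_memb ℓ hIl hMP hNec h)
    have hKbot : ℓ (K.imp UFml.bot) := SuccAux.pr_trans ℓ hIl hMP hNec hbr habs
    have t : UTaut ((K.imp UFml.bot).imp ((conj P).imp ((C.box).imp C))) := by
      intro v h0 hv
      have hs := SuccAux.v_sim v h0 hv C
      simp only [hK, UFml.and, UFml.neg, hv, h0, hs]
      cases v (conj P) <;> cases v C.box <;> cases v C <;> rfl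
    have h1 : ℓ ((conj P).imp ((C.box).imp C)) :=
      hMP _ _ (SuccAux.pr_taut ℓ hIl hMP hNec t) hKbot
    have h2 : ℓ (((conj P).box).imp (((C.box).imp C).box)) :=
      hMP _ _ (hIl _ (IlMinus.G2 _ _)) (hNec _ h1)
    have h2' : ℓ (((conj P).box).imp (C.box)) :=
      SuccAux.pr_trans ℓ hIl hMP hNec h2 (hIl _ (IlMinus.G3 C))
    have h3 : ℓ ((conj Γb).imp ((conj P).box)) := by
      apply SuccAux.conj_box_intro ℓ hIl hMP hNec
      intro M hM
      rcases Finset.mem_union.mp hM with h | h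
      · obtain ⟨hMΓ, hMb⟩ := Finset.mem_filter.mp h
        obtain ⟨B, rfl⟩ := SuccAux.isBox_iff.mp hMb
        exact SuccAux.pr_trans ℓ hIl hMP hNec
          (SuccAux.conj_memb ℓ hIl hMP hNec h) (SuccAux.box4 ℓ hIl hMP hNec)
      · obtain ⟨N, hN, rfl⟩ := Finset.mem_image.mp h
        obtain ⟨hNΓ, hNb⟩ := Finset.mem_filter.mp hN
        obtain ⟨B, rfl⟩ := SuccAux.isBox_iff.mp hNb
        have := SuccAux.conj_memb ℓ hIl hMP hNec (A := B.box) (X := Γb) hN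
        simpa [SuccAux.unbox] using this
    have h4 : ℓ ((conj Γ).imp (C.box)) :=
      SuccAux.pr_trans ℓ hIl hMP hNec (SuccAux.conj_mono ℓ hIl hMP hNec hΓbΓ)
        (SuccAux.pr_trans ℓ hIl hMP hNec h3 h2')
    have h5 : ℓ ((conj Γ).imp ((C.box).imp UFml.bot)) :=
      SuccAux.conj_memb ℓ hIl hMP hNec hC
    exact hΓnotbot (SuccAux.pr_mp2 ℓ hIl hMP hNec h5 h4)
  -- extend to a Φ-maximal consistent set
  obtain ⟨Δ, hΔ1, hΔ2, hΔ3, hΔ4⟩ :=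
    SuccAux.lindenbaum ℓ hIl hMP hNec Φ hΦ.2.1 Φ.toList
      (fun A hA => Finset.mem_toList.mp hA) X₀ hX₀Φ hcons
  have hsimΔ : C.sim ∈ Δ := hΔ1 (Finset.mem_insert_self _ _)
  have hboxΔ : C.box ∈ Δ :=
    hΔ1 (Finset.mem_insert_of_mem (Finset.mem_insert_self _ _))
  have hPΔ : P ⊆ Δ := fun M hM =>
    hΔ1 (Finset.mem_insert_of_mem (Finset.mem_insert_of_mem hM))
  have hboxΓ : C.box ∉ Γ := by
    intro h
    have h1 : ℓ ((conj Γ).imp ((C.box).imp UFml.bot)) :=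
      SuccAux.conj_memb ℓ hIl hMP hNec hC
    have h2 : ℓ ((conj Γ).imp (C.box)) := SuccAux.conj_memb ℓ hIl hMP hNec h
    exact hΓnotbot (SuccAux.pr_mp2 ℓ hIl hMP hNec h1 h2)
  refine ⟨Δ, ⟨hΔ2, hΔ3, fun A hA => hΔ4 A (Finset.mem_toList.mpr hA)⟩,
    ⟨?_, C, hboxΔ, hboxΓ⟩, hsimΔ, hboxΔ⟩
  intro B hB
  have hBb : B.box ∈ Γb := Finset.mem_filter.mpr ⟨hB, by simp [SuccAux.isBox]⟩
  constructor
  · have : B ∈ Γb.image SuccAux.unbox := by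
      refine Finset.mem_image.mpr ⟨B.box, hBb, rfl⟩
    exact hPΔ (Finset.mem_union_right _ this)
  · exact hPΔ (Finset.mem_union_left _ hBb)
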